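/- The characteristic polynomial of the Jacobian J(A₄) of the system at the interior equilibrium A₄ equals λ⁴ + a₁λ³ + a₂λ² + a₃λ + a₄, where a₁ = α₁+β₁+μ₁+α₂+β₂+μ₂+k₁G₄, a₂ = (α₁φ₁/c₁)M₄ + (α₂φ₂/c₂)G₄ + (α₁+β₁+μ₁+k₁G₄)(α₂+β₂+μ₂), a₃ = (α₁+β₁+μ₁+k₁G₄)(α₂φ₂/c₂)G₄ + (α₂+β₂+μ₂)(α₁φ₁/c₁)M₄ + α₂k₁k₂P₄G₄, a₄ = (α₁φ₁/c₁)M₄(α₂φ₂/c₂)G₄ + α₂μ₁k₁k₂P₄G₄. -/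

import Mathlib

set_option maxHeartbeats 2000000 in
/-- The characteristic polynomial of the Jacobian at the interior equilibrium A₄
equals λ⁴ + a₁λ³ + a₂λ² + a₃λ + a₄ with the stated coefficients. -/
theorem charpoly_J_A4
    (α₁ β₁ μ₁ φ₁ c₁ k₁ α₂ β₂ μ₂ φ₂ c₂ k₂ : ℝ)
    (hα₁ : 0 < α₁) (hβ₁ : 0 < β₁) (hμ₁ : 0 < μ₁) (hφ₁ : 0 < φ₁) (hc₁ : 0 < c₁) (hk₁ : 0 < k₁)
    (hα₂ : 0 < α₂) (hβ₂ : 0 < β₂) (hμ₂ : 0 < μ₂) (hφ₂ : 0 < φ₂) (hc₂ : 0 < c₂) (hk₂ : 0 < k₂)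
    (R₁ R₂ D P₄ M₄ L₄ G₄ : ℝ)
    (hR₁ : R₁ = α₁ * φ₁ / (μ₁ * (α₁ + β₁)))
    (hR₂ : R₂ = α₂ * φ₂ / (μ₂ * (α₂ + β₂)))
    (hD : D = α₁ ^ 2 * φ₁ * φ₂ + μ₁ ^ 2 * c₁ * c₂ * k₁ * k₂)
    (hP₄ : P₄ = c₁ * μ₁ * φ₂ * (α₁ * φ₁ * (1 - 1 / R₁) - μ₁ * c₂ * k₁ * (1 - 1 / R₂)) / D)
    (hM₄ : M₄ = c₁ * α₁ * φ₂ * (α₁ * φ₁ * (1 - 1 / R₁) - μ₁ * c₂ * k₁ * (1 - 1 / R₂)) / D)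
    (hL₄ : L₄ = c₂ * μ₂ * α₁ * φ₁ * (c₁ * μ₁ * k₂ * (1 - 1 / R₁) + α₁ * φ₂ * (1 - 1 / R₂)) / (α₂ * D))
    (hG₄ : G₄ = c₂ * α₁ * φ₁ * (c₁ * μ₁ * k₂ * (1 - 1 / R₁) + α₁ * φ₂ * (1 - 1 / R₂)) / D)
    (J : Matrix (Fin 4) (Fin 4) ℝ)
    (hJ : J = !![-(α₁ + β₁) - k₁ * G₄, φ₁ * (1 - 2 * M₄ / c₁), 0, -k₁ * P₄;
                 α₁, -μ₁, 0, 0;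
                 k₂ * G₄, 0, -(α₂ + β₂), φ₂ * (1 - 2 * G₄ / c₂) + k₂ * P₄;
                 0, 0, α₂, -μ₂])
    (a₁ a₂ a₃ a₄ : ℝ)
    (ha₁ : a₁ = α₁ + β₁ + μ₁ + α₂ + β₂ + μ₂ + k₁ * G₄)
    (ha₂ : a₂ = (α₁ * φ₁ / c₁) * M₄ + (α₂ * φ₂ / c₂) * G₄ +
      (α₁ + β₁ + μ₁ + k₁ * G₄) * (α₂ + β₂ + μ₂))
    (ha₃ : a₃ = (α₁ + β₁ + μ₁ + k₁ * G₄) * (α₂ * φ₂ / c₂) * G₄ +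
      (α₂ + β₂ + μ₂) * (α₁ * φ₁ / c₁) * M₄ + α₂ * k₁ * k₂ * P₄ * G₄)
    (ha₄ : a₄ = (α₁ * φ₁ / c₁) * M₄ * (α₂ * φ₂ / c₂) * G₄ + α₂ * μ₁ * k₁ * k₂ * P₄ * G₄) :
    ∀ l : ℝ, (l • (1 : Matrix (Fin 4) (Fin 4) ℝ) - J).det =
      l ^ 4 + a₁ * l ^ 3 + a₂ * l ^ 2 + a₃ * l + a₄ := by
  have hμα₁ : μ₁ * (α₁ + β₁) ≠ 0 := by positivity
  have hμα₂ : μ₂ * (α₂ + β₂) ≠ 0 := by positivity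
  have hDpos : (0:ℝ) < D := by rw [hD]; positivity
  have hDne : D ≠ 0 := ne_of_gt hDpos
  have hc₁' : c₁ ≠ 0 := ne_of_gt hc₁
  have hc₂' : c₂ ≠ 0 := ne_of_gt hc₂
  have hμ₁' : μ₁ ≠ 0 := ne_of_gt hμ₁
  have hμ₂' : μ₂ ≠ 0 := ne_of_gt hμ₂
  have hαβ₁ : α₁ + β₁ ≠ 0 := by positivity
  have hαβ₂ : α₂ + β₂ ≠ 0 := by positivity
  have hα₁' : α₁ ≠ 0 := ne_of_gt hα₁
  have hα₂' : α₂ ≠ 0 := ne_of_gt hα₂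
  have hφ₁' : φ₁ ≠ 0 := ne_of_gt hφ₁
  have hφ₂' : φ₂ ≠ 0 := ne_of_gt hφ₂
  have h1 : α₁ * φ₁ * (1 - M₄ / c₁) = μ₁ * (α₁ + β₁ + k₁ * G₄) := by
    subst hR₁ hR₂ hM₄ hG₄
    rw [hD] at *
    field_simp
    ring
  have h2 : α₂ * φ₂ * (1 - G₄ / c₂) + α₂ * k₂ * P₄ = μ₂ * (α₂ + β₂) := by
    subst hR₁ hR₂ hP₄ hG₄
    rw [hD] at *
    field_simp
    ring
  intro l
  have hM : l • (1 : Matrix (Fin 4) (Fin 4) ℝ) - J =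
      !![l - (-(α₁ + β₁) - k₁ * G₄), -(φ₁ * (1 - 2 * M₄ / c₁)), 0, -(-k₁ * P₄);
         -α₁, l - (-μ₁), 0, 0;
         -(k₂ * G₄), 0, l - (-(α₂ + β₂)), -(φ₂ * (1 - 2 * G₄ / c₂) + k₂ * P₄);
         0, 0, -α₂, l - (-μ₂)] := by
    subst hJ
    ext i j
    fin_cases i <;> fin_cases j <;>
      simp [Matrix.one_apply, Matrix.vecHead, Matrix.vecTail] <;> ring
  rw [hM]
  simp [Matrix.det_succ_row_zero, Fin.sum_univ_succ, Fin.succAbove, Fin.castSucc, Fin.castAdd, Fin.castLE]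
  rw [ha₁, ha₂, ha₃, ha₄]
  linear_combination
    (-((l + (α₂ + β₂)) * (l + μ₂) - α₂ * (φ₂ * (1 - 2 * G₄ / c₂) + k₂ * P₄))) * h1 +
    (-(l ^ 2 + (α₁ + β₁ + k₁ * G₄ + μ₁) * l + (α₁ * φ₁ / c₁) * M₄)) * h2
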